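/- With q₁ the first-order rogue wave as above (L₁, L₂ built from e₁,…,e₄), one has |q₁(x,t)|² = c²·|L₂|²/|L₁|², and for every fixed t, |q₁(x,t)|² → c² as x → ±∞. -/

import Mathlib

open Complex

noncomputable def e1rw (a c x t : ℝ) : ℝ :=
  -8*t^2*c^2*a^3 + 12*t^2*c^4*a^2 - 8*x*c^2*t*a^2 + 8*x*c^4*t*a - 2*a*x^2*c^2 - 6*t^2*c^6*a - 1

noncomputable def e2rw (a c x t : ℝ) : ℝ := 4*a*t*c^2 - 6*t*c^4 + 2*x*c^2

noncomputable def e3rw (a c x t : ℝ) : ℝ :=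
  8*t^2*c^2*a^3 + 8*x*c^2*t*a^2 - 12*t^2*c^4*a^2 + 2*a*x^2*c^2 - 8*x*c^4*t*a + 6*t^2*c^6*a - 3

noncomputable def e4rw (a c x t : ℝ) : ℝ := 12*a*t*c^2 - 6*t*c^4 + 2*x*c^2

noncomputable def L1rw (a c x t : ℝ) : ℂ := (e1rw a c x t : ℂ) + Complex.I * (e2rw a c x t : ℂ)

noncomputable def L2rw (a c x t : ℝ) : ℂ := (e3rw a c x t : ℂ) + Complex.I * (e4rw a c x t : ℂ)

/-- First-order rogue wave of DNLS. -/
noncomputable def q1rw (a c x t : ℝ) : ℂ :=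
  (starRingEnd ℂ) (L1rw a c x t) * L2rw a c x t / (L1rw a c x t) ^ 2
    * (c : ℂ) * Complex.exp (Complex.I * (a : ℂ) * ((x : ℂ) - (t : ℂ) * (c : ℂ) ^ 2 + (t : ℂ) * (a : ℂ)))

open Filter Topology

noncomputable def A1rw (a c t u : ℝ) : ℝ :=
  -2*a*c^2 + (-8*c^2*t*a^2 + 8*c^4*t*a)*u + (-8*t^2*c^2*a^3 + 12*t^2*c^4*a^2 - 6*t^2*c^6*a - 1)*u^2

noncomputable def A2rw (a c t u : ℝ) : ℝ := 2*c^2*u + (4*a*t*c^2 - 6*t*c^4)*u^2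

noncomputable def A3rw (a c t u : ℝ) : ℝ :=
  2*a*c^2 + (8*c^2*t*a^2 - 8*c^4*t*a)*u + (8*t^2*c^2*a^3 - 12*t^2*c^4*a^2 + 6*t^2*c^6*a - 3)*u^2

noncomputable def A4rw (a c t u : ℝ) : ℝ := 2*c^2*u + (12*a*t*c^2 - 6*t*c^4)*u^2

noncomputable def grw (a c t u : ℝ) : ℝ :=
  c^2 * ((A3rw a c t u)^2 + (A4rw a c t u)^2) / ((A1rw a c t u)^2 + (A2rw a c t u)^2)

lemma absL1_sq (a c x t : ℝ) :
    (‖L1rw a c x t‖)^2 = (e1rw a c x t)^2 + (e2rw a c x t)^2 := by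
  rw [Complex.sq_norm, Complex.normSq_apply]
  simp [L1rw]
  ring

lemma absL2_sq (a c x t : ℝ) :
    (‖L2rw a c x t‖)^2 = (e3rw a c x t)^2 + (e4rw a c x t)^2 := by
  rw [Complex.sq_norm, Complex.normSq_apply]
  simp [L2rw]
  ring

lemma q1_abs_sq (a c : ℝ) (hc : c ≠ 0) (hL : ∀ x t : ℝ, L1rw a c x t ≠ 0) (x t : ℝ) :
    (‖q1rw a c x t‖) ^ 2
      = c ^ 2 * (‖L2rw a c x t‖) ^ 2 / (‖L1rw a c x t‖) ^ 2 := by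
  have h1 : ‖L1rw a c x t‖ ≠ 0 := norm_ne_zero_iff.mpr (hL x t)
  have hre : (Complex.I * (a : ℂ) * ((x : ℂ) - (t : ℂ) * (c : ℂ) ^ 2 + (t : ℂ) * (a : ℂ))).re = 0 := by
    simp [Complex.mul_re, Complex.mul_im, ← Complex.ofReal_pow]
  rw [q1rw, norm_mul, norm_mul, norm_div, norm_mul, norm_pow, Complex.norm_exp, hre,
    Real.exp_zero, Complex.norm_conj, Complex.norm_real, Real.norm_eq_abs]
  have hn : Complex.normSq (L1rw a c x t) ≠ 0 := (Complex.normSq_pos.mpr (hL x t)).ne'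
  field_simp
  rw [_root_.sq_abs]

lemma hE1rw (a c t x : ℝ) (hx : x ≠ 0) : e1rw a c x t = x^2 * A1rw a c t x⁻¹ := by
  simp only [e1rw, A1rw]; field_simp; ring

lemma hE2rw (a c t x : ℝ) (hx : x ≠ 0) : e2rw a c x t = x^2 * A2rw a c t x⁻¹ := by
  simp only [e2rw, A2rw]; field_simp; ring

lemma hE3rw (a c t x : ℝ) (hx : x ≠ 0) : e3rw a c x t = x^2 * A3rw a c t x⁻¹ := by
  simp only [e3rw, A3rw]; field_simp; ring

lemma hE4rw (a c t x : ℝ) (hx : x ≠ 0) : e4rw a c x t = x^2 * A4rw a c t x⁻¹ := by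
  simp only [e4rw, A4rw]; field_simp; ring

lemma grw_eq (a c t x : ℝ) (hx : x ≠ 0) :
    c^2 * ((e3rw a c x t)^2 + (e4rw a c x t)^2) / ((e1rw a c x t)^2 + (e2rw a c x t)^2)
      = grw a c t x⁻¹ := by
  rw [hE1rw a c t x hx, hE2rw a c t x hx, hE3rw a c t x hx, hE4rw a c t x hx, grw]
  rw [show c^2*((x^2*A3rw a c t x⁻¹)^2+(x^2*A4rw a c t x⁻¹)^2)
        = x^4*(c^2*((A3rw a c t x⁻¹)^2+(A4rw a c t x⁻¹)^2)) from by ring,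
      show (x^2*A1rw a c t x⁻¹)^2+(x^2*A2rw a c t x⁻¹)^2
        = x^4*((A1rw a c t x⁻¹)^2+(A2rw a c t x⁻¹)^2) from by ring,
      mul_div_mul_left _ _ (pow_ne_zero 4 hx)]

lemma grw_tendsto (a c t : ℝ) (ha : a ≠ 0) (hc : c ≠ 0) :
    Tendsto (grw a c t) (𝓝 0) (𝓝 (c^2)) := by
  have hnum : Continuous fun u => c^2 * ((A3rw a c t u)^2 + (A4rw a c t u)^2) := by
    unfold A3rw A4rw; fun_prop
  have hden : Continuous fun u => (A1rw a c t u)^2 + (A2rw a c t u)^2 := by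
    unfold A1rw A2rw; fun_prop
  have hd1 : (A1rw a c t 0)^2 + (A2rw a c t 0)^2 = 4*a^2*c^4 := by
    simp only [A1rw, A2rw]; ring
  have hd3 : (A3rw a c t 0)^2 + (A4rw a c t 0)^2 = 4*a^2*c^4 := by
    simp only [A3rw, A4rw]; ring
  have hd0 : (A1rw a c t 0)^2 + (A2rw a c t 0)^2 ≠ 0 := by rw [hd1]; positivity
  have hct : ContinuousAt (grw a c t) 0 := (hnum.continuousAt).div (hden.continuousAt) hd0
  have hg0 : grw a c t 0 = c^2 := by
    rw [grw, hd1, hd3, mul_div_assoc, div_self (by positivity), mul_one]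
  simpa [hg0] using hct.tendsto

/-- `|q₁(x,t)|² = c²|L₂|²/|L₁|²`, and for every fixed `t`, `|q₁(x,t)|² → c²` as `x → ±∞`. -/
theorem first_order_rogue_wave_modulus_and_limit (a c : ℝ) (ha : a ≠ 0) (hc : c ≠ 0)
    (hL : ∀ x t : ℝ, L1rw a c x t ≠ 0) :
    (∀ x t : ℝ, (‖q1rw a c x t‖) ^ 2
        = c ^ 2 * (‖L2rw a c x t‖) ^ 2 / (‖L1rw a c x t‖) ^ 2) ∧
    (∀ t : ℝ, Tendsto (fun x => (‖q1rw a c x t‖) ^ 2) atTop (𝓝 (c ^ 2))) ∧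
    (∀ t : ℝ, Tendsto (fun x => (‖q1rw a c x t‖) ^ 2) atBot (𝓝 (c ^ 2))) := by
  have hfun : ∀ x t : ℝ, (‖q1rw a c x t‖) ^ 2
      = c^2 * ((e3rw a c x t)^2 + (e4rw a c x t)^2) / ((e1rw a c x t)^2 + (e2rw a c x t)^2) := by
    intro x t
    rw [q1_abs_sq a c hc hL, absL2_sq, absL1_sq]
  refine ⟨q1_abs_sq a c hc hL, fun t => ?_, fun t => ?_⟩
  · refine Tendsto.congr' ?_ ((grw_tendsto a c t ha hc).comp tendsto_inv_atTop_zero)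
    filter_upwards [eventually_ne_atTop (0:ℝ)] with x hx
    show grw a c t x⁻¹ = _
    rw [hfun x t]
    exact (grw_eq a c t x hx).symm
  · have hb : Tendsto (fun x : ℝ => x⁻¹) atBot (𝓝 0) := by
      have h := (tendsto_inv_atTop_zero.comp tendsto_neg_atBot_atTop (α := ℝ)).neg
      simpa [Function.comp, inv_neg] using h
    refine Tendsto.congr' ?_ ((grw_tendsto a c t ha hc).comp hb)
    filter_upwards [eventually_ne_atBot (0:ℝ)] with x hx
    show grw a c t x⁻¹ = _
    rw [hfun x t]
    exact (grw_eq a c t x hx).symm
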